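/- arXiv:2206.06148 — 2 statements merged into one kernel-verified Lean document; each statement's English description precedes it below -/
import Mathlib

section
/- Let k ≥ 1 and let p_1 ≤ p_2 ≤ … ≤ p_k be integers with p_i ≥ 3 for every i. Then the combinatorial curvature condition 1 − k/2 + (1/p_1 + 1/p_2 + … + 1/p_k) = 0 holds (equivalently, (1/2 − 1/p_1) + … + (1/2 − 1/p_k) = 1) if and only if the tuple (p_1,…,p_k) is one of the following seventeen tuples: (3,7,42), (3,8,24), (3,9,18), (3,10,15), (3,12,12), (4,5,20), (4,6,12), (4,8,8), (5,5,10), (6,6,6), (3,3,4,12), (3,3,6,6), (3,4,4,6), (4,4,4,4), (3,3,3,3,6), (3,3,3,4,4), (3,3,3,3,3,3). -/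
set_option maxHeartbeats 1600000

private lemma coe_list (l : List ℕ) :
    (do let a ← l; pure ((a : ℚ)) : List ℚ) = l.map (fun a : ℕ => (a : ℚ)) := by
  induction l with
  | nil => rfl
  | cons x xs ih => simpa using ih

private lemma tuple3 (a b c : ℕ) (ha : 3 ≤ a) (hab : a ≤ b) (hbc : b ≤ c)
    (key : 2*(b*c + a*c + a*b) = a*b*c) :
    (a=3∧b=7∧c=42)∨(a=3∧b=8∧c=24)∨(a=3∧b=9∧c=18)∨(a=3∧b=10∧c=15)∨(a=3∧b=12∧c=12)∨
    (a=4∧b=5∧c=20)∨(a=4∧b=6∧c=12)∨(a=4∧b=8∧c=8)∨(a=5∧b=5∧c=10)∨(a=6∧b=6∧c=6) := by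
  have hc0 : 0 < c := by omega
  have hbc0 : 0 < b * c := Nat.mul_pos (by omega) hc0
  have ha6 : a ≤ 6 := by
    have h1 : a*c ≤ b*c := Nat.mul_le_mul_right c hab
    have h2 : a*b ≤ b*c := Nat.mul_le_mul hab hbc
    exact Nat.le_of_mul_le_mul_right (by nlinarith : a*(b*c) ≤ 6*(b*c)) hbc0
  clear hbc0
  have hb12 : b ≤ 12 := by
    have h1 : a*c ≤ b*c := Nat.mul_le_mul_right c hab
    have h2 : b*c ≤ c*c := Nat.mul_le_mul_right c hbc
    have := Nat.le_of_mul_le_mul_right (by nlinarith : (2*b)*c ≤ 24*c) hc0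
    omega
  interval_cases a <;> interval_cases b <;> (norm_num; omega)

private lemma tuple4 (a b c d : ℕ) (ha : 3 ≤ a) (hab : a ≤ b) (hbc : b ≤ c) (hcd : c ≤ d)
    (key : b*c*d + a*c*d + a*b*d + a*b*c = a*b*c*d) :
    (a=3∧b=3∧c=4∧d=12)∨(a=3∧b=3∧c=6∧d=6)∨(a=3∧b=4∧c=4∧d=6)∨(a=4∧b=4∧c=4∧d=4) := by
  have hd0 : 0 < d := by omega
  have hcd0 : 0 < c*d := Nat.mul_pos (by omega) hd0
  have hm0 : 0 < b*(c*d) := Nat.mul_pos (by omega) hcd0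
  have ha4 : a ≤ 4 := by
    have t1 : a*(c*d) ≤ b*(c*d) := Nat.mul_le_mul_right _ hab
    have t2 : a*(b*d) ≤ c*(b*d) := Nat.mul_le_mul_right _ (hab.trans hbc)
    have t3 : a*(b*c) ≤ d*(b*c) := Nat.mul_le_mul_right _ ((hab.trans hbc).trans hcd)
    exact Nat.le_of_mul_le_mul_right (by nlinarith : a*(b*(c*d)) ≤ 4*(b*(c*d))) hm0
  have hb4 : b ≤ 4 := by
    have u1 : b*d ≤ c*d := Nat.mul_le_mul_right d hbc
    have u2 : b*c ≤ c*d := Nat.mul_le_mul hbc hcd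
    have := Nat.le_of_mul_le_mul_right
      (by nlinarith : (2*b)*(c*d) ≤ 9*(c*d)) hcd0
    omega
  clear hm0 hcd0
  interval_cases a <;> interval_cases b <;>
    (have hc : c ≤ 6 := by nlinarith [Nat.mul_le_mul_right d hcd, hd0]) <;>
    interval_cases c <;> (norm_num; omega)

private lemma tuple5 (a b c d e : ℕ) (ha : 3 ≤ a) (hab : a ≤ b) (hbc : b ≤ c)
    (hcd : c ≤ d) (hde : d ≤ e)
    (key : 2*(b*c*d*e + a*c*d*e + a*b*d*e + a*b*c*e + a*b*c*d) = 3*(a*b*c*d*e)) :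
    (a=3∧b=3∧c=3∧d=3∧e=6)∨(a=3∧b=3∧c=3∧d=4∧e=4) := by
  have he0 : 0 < e := by omega
  have hde0 : 0 < d*e := Nat.mul_pos (by omega) he0
  have hcde0 : 0 < c*(d*e) := Nat.mul_pos (by omega) hde0
  have hm0 : 0 < b*(c*(d*e)) := Nat.mul_pos (by omega) hcde0
  have hac : a ≤ c := hab.trans hbc
  have had : a ≤ d := hac.trans hcd
  have hae : a ≤ e := had.trans hde
  have ha3 : a = 3 := by
    have t1 : a*(c*d*e) ≤ b*(c*d*e) := Nat.mul_le_mul_right _ hab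
    have t2 : a*(b*d*e) ≤ c*(b*d*e) := Nat.mul_le_mul_right _ hac
    have t3 : a*(b*c*e) ≤ d*(b*c*e) := Nat.mul_le_mul_right _ had
    have t4 : a*(b*c*d) ≤ e*(b*c*d) := Nat.mul_le_mul_right _ hae
    have := Nat.le_of_mul_le_mul_right
      (by nlinarith : (3*a)*(b*(c*(d*e))) ≤ 10*(b*(c*(d*e)))) hm0
    omega
  subst ha3
  have hb3 : b = 3 := by
    have t2 : b*(d*e) ≤ c*(d*e) := Nat.mul_le_mul_right _ hbc
    have t3 : b*(c*e) ≤ d*(c*e) := Nat.mul_le_mul_right _ (hbc.trans hcd)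
    have t4 : b*(c*d) ≤ e*(c*d) := Nat.mul_le_mul_right _ ((hbc.trans hcd).trans hde)
    have := Nat.le_of_mul_le_mul_right
      (by nlinarith : (7*b)*(c*(d*e)) ≤ 24*(c*(d*e))) hcde0
    omega
  subst hb3
  have hc4 : c ≤ 4 := by
    have t3 : c*e ≤ d*e := Nat.mul_le_mul_right _ hcd
    have t4 : c*d ≤ e*d := Nat.mul_le_mul_right _ (hcd.trans hde)
    have := Nat.le_of_mul_le_mul_right
      (by nlinarith : (2*c)*(d*e) ≤ 9*(d*e)) hde0
    omega
  have hd6 : d ≤ 6 := by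
    have := Nat.le_of_mul_le_mul_right
      (by nlinarith [Nat.mul_le_mul_right e hde] : d*e ≤ 6*e) he0
    omega
  interval_cases c <;> interval_cases d <;> (norm_num; omega)

private lemma tuple6 (a b c d e f : ℕ) (ha : 3 ≤ a) (hab : a ≤ b) (hbc : b ≤ c)
    (hcd : c ≤ d) (hde : d ≤ e) (hef : e ≤ f)
    (key : b*c*d*e*f + a*c*d*e*f + a*b*d*e*f + a*b*c*e*f + a*b*c*d*f + a*b*c*d*e
      = 2*(a*b*c*d*e*f)) :
    a=3∧b=3∧c=3∧d=3∧e=3∧f=3 := by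
  have hf0 : 0 < f := by omega
  have hef0 : 0 < e*f := Nat.mul_pos (by omega) hf0
  have hdef0 : 0 < d*(e*f) := Nat.mul_pos (by omega) hef0
  have hcdef0 : 0 < c*(d*(e*f)) := Nat.mul_pos (by omega) hdef0
  have hm0 : 0 < b*(c*(d*(e*f))) := Nat.mul_pos (by omega) hcdef0
  have hac : a ≤ c := hab.trans hbc
  have had : a ≤ d := hac.trans hcd
  have hae : a ≤ e := had.trans hde
  have haf : a ≤ f := hae.trans hef
  have ha3 : a = 3 := by
    have t1 : a*(c*d*e*f) ≤ b*(c*d*e*f) := Nat.mul_le_mul_right _ hab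
    have t2 : a*(b*d*e*f) ≤ c*(b*d*e*f) := Nat.mul_le_mul_right _ hac
    have t3 : a*(b*c*e*f) ≤ d*(b*c*e*f) := Nat.mul_le_mul_right _ had
    have t4 : a*(b*c*d*f) ≤ e*(b*c*d*f) := Nat.mul_le_mul_right _ hae
    have t5 : a*(b*c*d*e) ≤ f*(b*c*d*e) := Nat.mul_le_mul_right _ haf
    have := Nat.le_of_mul_le_mul_right
      (by nlinarith : (2*a)*(b*(c*(d*(e*f)))) ≤ 6*(b*(c*(d*(e*f))))) hm0
    omega
  subst ha3
  have hb3 : b = 3 := by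
    have t2 : b*(d*e*f) ≤ c*(d*e*f) := Nat.mul_le_mul_right _ hbc
    have t3 : b*(c*e*f) ≤ d*(c*e*f) := Nat.mul_le_mul_right _ (hbc.trans hcd)
    have t4 : b*(c*d*f) ≤ e*(c*d*f) := Nat.mul_le_mul_right _ ((hbc.trans hcd).trans hde)
    have t5 : b*(c*d*e) ≤ f*(c*d*e) := Nat.mul_le_mul_right _ (((hbc.trans hcd).trans hde).trans hef)
    have := Nat.le_of_mul_le_mul_right
      (by nlinarith : (5*b)*(c*(d*(e*f))) ≤ 15*(c*(d*(e*f)))) hcdef0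
    omega
  subst hb3
  have hc3 : c = 3 := by
    have t3 : c*(e*f) ≤ d*(e*f) := Nat.mul_le_mul_right _ hcd
    have t4 : c*(d*f) ≤ e*(d*f) := Nat.mul_le_mul_right _ (hcd.trans hde)
    have t5 : c*(d*e) ≤ f*(d*e) := Nat.mul_le_mul_right _ ((hcd.trans hde).trans hef)
    have := Nat.le_of_mul_le_mul_right
      (by nlinarith : (12*c)*(d*(e*f)) ≤ 36*(d*(e*f))) hdef0
    omega
  subst hc3
  have hd3 : d = 3 := by
    have t4 : d*f ≤ e*f := Nat.mul_le_mul_right _ hde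
    have t5 : d*e ≤ f*e := Nat.mul_le_mul_right _ (hde.trans hef)
    have := Nat.le_of_mul_le_mul_right
      (by nlinarith : d*(e*f) ≤ 3*(e*f)) hef0
    omega
  subst hd3
  have he3 : e = 3 := by
    have := Nat.le_of_mul_le_mul_right
      (by nlinarith [Nat.mul_le_mul_right f hef] : (2*e)*f ≤ 6*f) hf0
    omega
  subst he3
  omega

/-- Arithmetic content of Proposition 3.1: a nonempty nondecreasing list of integers
`p₁ ≤ p₂ ≤ … ≤ p_k`, each at least 3, satisfies the zero-curvature condition
`1 - k/2 + ∑ 1/pᵢ = 0` iff it is one of the seventeen listed tuples. -/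
theorem curvature_zero_tuples (l : List ℕ) (hne : l ≠ [])
    (hsorted : l.Pairwise (· ≤ ·)) (h3 : ∀ p ∈ l, 3 ≤ p) :
    (1 - (l.length : ℚ) / 2 + (l.map fun p => (1 : ℚ) / (p : ℚ)).sum = 0) ↔
      l ∈ [[3, 7, 42], [3, 8, 24], [3, 9, 18], [3, 10, 15], [3, 12, 12],
           [4, 5, 20], [4, 6, 12], [4, 8, 8], [5, 5, 10], [6, 6, 6],
           [3, 3, 4, 12], [3, 3, 6, 6], [3, 4, 4, 6], [4, 4, 4, 4],
           [3, 3, 3, 3, 6], [3, 3, 3, 4, 4], [3, 3, 3, 3, 3, 3]] := by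
  constructor
  · intro h
    rw [coe_list l, List.map_map] at h
    simp only [Function.comp_def] at h
    -- sum bounds give length bounds
    have hub := List.sum_le_card_nsmul (l.map fun p : ℕ => (1:ℚ)/p) (1/3) (by
      simp only [List.mem_map]
      rintro x ⟨p, hp, rfl⟩
      exact one_div_le_one_div_of_le (by norm_num) (by exact_mod_cast h3 p hp))
    rw [List.length_map, nsmul_eq_mul] at hub
    have hlb : 0 < (l.map fun p : ℕ => (1:ℚ)/p).sum := by
      apply List.sum_pos
      · simp only [List.mem_map]
        rintro x ⟨p, hp, rfl⟩
        have := h3 p hp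
        have : (0:ℚ) < p := by exact_mod_cast (by omega : 0 < p)
        positivity
      · intro hmap
        exact hne (by simpa using hmap)
    have hl3 : 3 ≤ l.length := by
      have : (2:ℚ) < l.length := by linarith
      exact_mod_cast (by exact_mod_cast this : (2:ℕ) < l.length)
    have hl6 : l.length ≤ 6 := by
      have : (l.length:ℚ) ≤ 6 := by linarith
      exact_mod_cast this
    clear hub hlb hne
    rcases l with _|⟨a, _|⟨b, _|⟨c, _|⟨d, _|⟨e, _|⟨f, rest⟩⟩⟩⟩⟩⟩ <;>
      simp only [List.length_cons, List.length_nil] at hl3 hl6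
    · omega
    · omega
    · omega
    · -- length 3
      have ha := h3 a (by simp)
      obtain ⟨h1, hs2⟩ := List.pairwise_cons.mp hsorted
      obtain ⟨h2, -⟩ := List.pairwise_cons.mp hs2
      have hab : a ≤ b := h1 b (by simp)
      have hbc : b ≤ c := h2 c (by simp)
      simp only [List.map_cons, List.map_nil, List.sum_cons, List.sum_nil,
        List.length_cons, List.length_nil] at h
      have ha0 : (a:ℚ) ≠ 0 := Nat.cast_ne_zero.mpr (by omega)
      have hb0 : (b:ℚ) ≠ 0 := Nat.cast_ne_zero.mpr (by omega)
      have hc0 : (c:ℚ) ≠ 0 := Nat.cast_ne_zero.mpr (by omega)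
      have key : 2*(b*c + a*c + a*b) = a*b*c := by
        field_simp at h
        qify
        first
          | linear_combination h | linear_combination -h
          | linear_combination 2*h | linear_combination (-2:ℚ)*h
          | linear_combination h/2 | linear_combination -h/2
      rcases tuple3 a b c ha hab hbc key with
        ⟨rfl,rfl,rfl⟩|⟨rfl,rfl,rfl⟩|⟨rfl,rfl,rfl⟩|⟨rfl,rfl,rfl⟩|⟨rfl,rfl,rfl⟩|
        ⟨rfl,rfl,rfl⟩|⟨rfl,rfl,rfl⟩|⟨rfl,rfl,rfl⟩|⟨rfl,rfl,rfl⟩|⟨rfl,rfl,rfl⟩ <;> simp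
    · -- length 4
      have ha := h3 a (by simp)
      obtain ⟨h1, hs2⟩ := List.pairwise_cons.mp hsorted
      obtain ⟨h2, hs3⟩ := List.pairwise_cons.mp hs2
      obtain ⟨h3', -⟩ := List.pairwise_cons.mp hs3
      have hab : a ≤ b := h1 b (by simp)
      have hbc : b ≤ c := h2 c (by simp)
      have hcd : c ≤ d := h3' d (by simp)
      simp only [List.map_cons, List.map_nil, List.sum_cons, List.sum_nil,
        List.length_cons, List.length_nil] at h
      have ha0 : (a:ℚ) ≠ 0 := Nat.cast_ne_zero.mpr (by omega)
      have hb0 : (b:ℚ) ≠ 0 := Nat.cast_ne_zero.mpr (by omega)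
      have hc0 : (c:ℚ) ≠ 0 := Nat.cast_ne_zero.mpr (by omega)
      have hd0 : (d:ℚ) ≠ 0 := Nat.cast_ne_zero.mpr (by omega)
      have key : b*c*d + a*c*d + a*b*d + a*b*c = a*b*c*d := by
        field_simp at h
        qify
        first
          | linear_combination h | linear_combination -h
          | linear_combination 2*h | linear_combination (-2:ℚ)*h
          | linear_combination h/2 | linear_combination -h/2
      rcases tuple4 a b c d ha hab hbc hcd key with
        ⟨rfl,rfl,rfl,rfl⟩|⟨rfl,rfl,rfl,rfl⟩|⟨rfl,rfl,rfl,rfl⟩|⟨rfl,rfl,rfl,rfl⟩ <;> simp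
    · -- length 5
      have ha := h3 a (by simp)
      obtain ⟨h1, hs2⟩ := List.pairwise_cons.mp hsorted
      obtain ⟨h2, hs3⟩ := List.pairwise_cons.mp hs2
      obtain ⟨h3', hs4⟩ := List.pairwise_cons.mp hs3
      obtain ⟨h4, -⟩ := List.pairwise_cons.mp hs4
      have hab : a ≤ b := h1 b (by simp)
      have hbc : b ≤ c := h2 c (by simp)
      have hcd : c ≤ d := h3' d (by simp)
      have hde : d ≤ e := h4 e (by simp)
      simp only [List.map_cons, List.map_nil, List.sum_cons, List.sum_nil,
        List.length_cons, List.length_nil] at h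
      have ha0 : (a:ℚ) ≠ 0 := Nat.cast_ne_zero.mpr (by omega)
      have hb0 : (b:ℚ) ≠ 0 := Nat.cast_ne_zero.mpr (by omega)
      have hc0 : (c:ℚ) ≠ 0 := Nat.cast_ne_zero.mpr (by omega)
      have hd0 : (d:ℚ) ≠ 0 := Nat.cast_ne_zero.mpr (by omega)
      have he0 : (e:ℚ) ≠ 0 := Nat.cast_ne_zero.mpr (by omega)
      have key : 2*(b*c*d*e + a*c*d*e + a*b*d*e + a*b*c*e + a*b*c*d) = 3*(a*b*c*d*e) := by
        field_simp at h
        qify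
        first
          | linear_combination h | linear_combination -h
          | linear_combination 2*h | linear_combination (-2:ℚ)*h
          | linear_combination h/2 | linear_combination -h/2
      rcases tuple5 a b c d e ha hab hbc hcd hde key with
        ⟨rfl,rfl,rfl,rfl,rfl⟩|⟨rfl,rfl,rfl,rfl,rfl⟩ <;> simp
    · -- length 6
      have hrest : rest = [] := List.length_eq_zero_iff.mp (by omega)
      subst hrest
      have ha := h3 a (by simp)
      obtain ⟨h1, hs2⟩ := List.pairwise_cons.mp hsorted
      obtain ⟨h2, hs3⟩ := List.pairwise_cons.mp hs2
      obtain ⟨h3', hs4⟩ := List.pairwise_cons.mp hs3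
      obtain ⟨h4, hs5⟩ := List.pairwise_cons.mp hs4
      obtain ⟨h5, -⟩ := List.pairwise_cons.mp hs5
      have hab : a ≤ b := h1 b (by simp)
      have hbc : b ≤ c := h2 c (by simp)
      have hcd : c ≤ d := h3' d (by simp)
      have hde : d ≤ e := h4 e (by simp)
      have hef : e ≤ f := h5 f (by simp)
      simp only [List.map_cons, List.map_nil, List.sum_cons, List.sum_nil,
        List.length_cons, List.length_nil] at h
      have ha0 : (a:ℚ) ≠ 0 := Nat.cast_ne_zero.mpr (by omega)
      have hb0 : (b:ℚ) ≠ 0 := Nat.cast_ne_zero.mpr (by omega)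
      have hc0 : (c:ℚ) ≠ 0 := Nat.cast_ne_zero.mpr (by omega)
      have hd0 : (d:ℚ) ≠ 0 := Nat.cast_ne_zero.mpr (by omega)
      have he0 : (e:ℚ) ≠ 0 := Nat.cast_ne_zero.mpr (by omega)
      have hf0 : (f:ℚ) ≠ 0 := Nat.cast_ne_zero.mpr (by omega)
      have key : b*c*d*e*f + a*c*d*e*f + a*b*d*e*f + a*b*c*e*f + a*b*c*d*f + a*b*c*d*e
          = 2*(a*b*c*d*e*f) := by
        field_simp at h
        qify
        first
          | linear_combination h | linear_combination -h
          | linear_combination 2*h | linear_combination (-2:ℚ)*h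
          | linear_combination h/2 | linear_combination -h/2
      obtain ⟨rfl,rfl,rfl,rfl,rfl,rfl⟩ := tuple6 a b c d e f ha hab hbc hcd hde hef key
      simp
  · intro hmem
    fin_cases hmem <;> norm_num
end

section
/- Let G be the simple graph on vertex set {0,1,…,11} whose edge set is {0,1},{0,3},{0,5},{0,7},{1,2},{1,8},{1,10},{2,3},{2,8},{2,11},{3,4},{3,7},{4,5},{4,6},{4,9},{4,11},{5,6},{5,10},{5,11},{6,7},{6,9},{6,10},{7,8},{8,9},{9,10},{9,11},{10,11}. Then the characteristic polynomial of the adjacency matrix of G equals a^12 − 27a^10 − 20a^9 + 201a^8 + 192a^7 − 532a^6 − 552a^5 + 492a^4 + 560a^3 − 84a^2 − 192a − 44. -/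
open Polynomial SimpleGraph

/-- Edge list (each unordered edge listed once) of the graph `H7`. -/
def edgesH7 : List (Fin 12 × Fin 12) :=
  [(0, 1), (0, 3), (0, 5), (0, 7), (1, 2), (1, 8), (1, 10), (2, 3), (2, 8), (2, 11), (3, 4), (3, 7), (4, 5), (4, 6), (4, 9), (4, 11), (5, 6), (5, 10), (5, 11), (6, 7), (6, 9), (6, 10), (7, 8), (8, 9), (9, 10), (9, 11), (10, 11)]

/-- The simple graph on vertex set `Fin 12` with the given edge set. -/
def H7 : SimpleGraph (Fin 12) :=
  SimpleGraph.fromRel (fun i j => (i, j) ∈ edgesH7)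

instance : DecidableRel H7.Adj := fun a b =>
  inferInstanceAs (Decidable (a ≠ b ∧ ((a, b) ∈ edgesH7 ∨ (b, a) ∈ edgesH7)))

instance decEntryZ {n : ℕ} (M : Matrix (Fin n) (Fin n) ℤ) (i j : Fin n) : Decidable (M i j = 0) := Int.decEq _ _

open Matrix in
lemma detEMU {n : ℕ} (M E U : Matrix (Fin n) (Fin n) ℤ) (d e u : ℤ)
    (hEM : E * M = U) (hE : E.BlockTriangular OrderDual.toDual) (hU : U.BlockTriangular id)
    (he : ∏ i, E i i = e) (hu : ∏ i, U i i = u) (hne : e ≠ 0) (hd : u = e * d) : M.det = d := by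
  have h1 : E.det * M.det = U.det := by rw [← Matrix.det_mul, hEM]
  rw [Matrix.det_of_lowerTriangular E hE, Matrix.det_of_upperTriangular hU, he, hu, hd] at h1
  exact mul_left_cancel₀ hne h1

lemma eval_cp {n : ℕ} (M : Matrix (Fin n) (Fin n) ℤ) (t : ℤ) :
    (M.charpoly).eval t = (Matrix.diagonal (fun _ => t) - M).det := by
  rw [Matrix.charpoly]
  have h := RingHom.map_det (Polynomial.evalRingHom t) (Matrix.charmatrix M)
  rw [coe_evalRingHom] at h
  rw [h]
  congr 1
  ext i j
  by_cases hij : i = j <;>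
    simp [hij, Matrix.charmatrix_apply_eq, Matrix.charmatrix_apply_ne, Matrix.sub_apply,
      Matrix.diagonal, Matrix.one_apply]

def Mm8 : Matrix (Fin 12) (Fin 12) ℤ :=
!![-8, -1, 0, -1, 0, -1, 0, -1, 0, 0, 0, 0;
  -1, -8, -1, 0, 0, 0, 0, 0, -1, 0, -1, 0;
  0, -1, -8, -1, 0, 0, 0, 0, -1, 0, 0, -1;
  -1, 0, -1, -8, -1, 0, 0, -1, 0, 0, 0, 0;
  0, 0, 0, -1, -8, -1, -1, 0, 0, -1, 0, -1;
  -1, 0, 0, 0, -1, -8, -1, 0, 0, 0, -1, -1;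
  0, 0, 0, 0, -1, -1, -8, -1, 0, -1, -1, 0;
  -1, 0, 0, -1, 0, 0, -1, -8, -1, 0, 0, 0;
  0, -1, -1, 0, 0, 0, 0, -1, -8, -1, 0, 0;
  0, 0, 0, 0, -1, 0, -1, 0, -1, -8, -1, -1;
  0, -1, 0, 0, 0, -1, -1, 0, 0, -1, -8, -1;
  0, 0, -1, 0, -1, -1, 0, 0, 0, -1, -1, -8]

def Em8 : Matrix (Fin 12) (Fin 12) ℤ :=
!![1, 0, 0, 0, 0, 0, 0, 0, 0, 0, 0, 0;
  1, -8, 0, 0, 0, 0, 0, 0, 0, 0, 0, 0;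
  1, -8, 63, 0, 0, 0, 0, 0, 0, 0, 0, 0;
  64, -16, 64, -496, 0, 0, 0, 0, 0, 0, 0, 0;
  64, -16, 64, -496, 3840, 0, 0, 0, 0, 0, 0, 0;
  3969, -520, 191, -1008, 3904, -30224, 0, 0, 0, 0, 0, 0;
  2961, -329, -329, 2961, -26320, -26320, 233919, 0, 0, 0, 0, 0;
  210231, -23359, -23359, 210231, -50008, -50008, 239841, -1818712, 0, 0, 0, 0;
  391510, -1586767, -1586767, 391510, -71393, -71393, 251027, -1865430, 13889393, 0, 0, 0;
  1174530, -1729553, -1407133, -1082410, 12231233, -3244927, 12553653, -3339350, 14069027, -106076180, 0, 0;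
  26582262, -109004945, 11896325, -9971101, 36128162, -98844109, -81713079, 5162059, 23805446, -98497007, 809755527, 0;
  -48664360, -157612082, 827252206, -192290402, 664773688, 644255682, -340608606, 94961682, -178130088, 660438898, 660438898, -6089985076]

def Um8 : Matrix (Fin 12) (Fin 12) ℤ :=
!![-8, -1, 0, -1, 0, -1, 0, -1, 0, 0, 0, 0;
  0, 63, 8, -1, 0, -1, 0, -1, 8, 0, 8, 0;
  0, 0, -496, -64, 0, -1, 0, -1, -55, 0, 8, -63;
  0, 0, 0, 3840, 496, -64, 0, 432, -48, 0, 16, -64;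
  0, 0, 0, 0, -30224, -3904, -3840, 432, -48, -3840, 16, -3904;
  0, 0, 0, 0, 0, 233919, 26320, -2961, 329, -3904, 30744, 26129;
  0, 0, 0, 0, 0, 0, -1818712, -239841, 658, -207599, -207270, 52969;
  0, 0, 0, 0, 0, 0, 0, 13889393, 1865430, -189833, -166474, 123375;
  0, 0, 0, 0, 0, 0, 0, 0, -106076180, -14069027, 1407133, 1729553;
  0, 0, 0, 0, 0, 0, 0, 0, 0, 809755527, 98497007, 98497007;
  0, 0, 0, 0, 0, 0, 0, 0, 0, 0, -6089985076, -660438898;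
  0, 0, 0, 0, 0, 0, 0, 0, 0, 0, 0, 45262721236]

def Mm7 : Matrix (Fin 12) (Fin 12) ℤ :=
!![-7, -1, 0, -1, 0, -1, 0, -1, 0, 0, 0, 0;
  -1, -7, -1, 0, 0, 0, 0, 0, -1, 0, -1, 0;
  0, -1, -7, -1, 0, 0, 0, 0, -1, 0, 0, -1;
  -1, 0, -1, -7, -1, 0, 0, -1, 0, 0, 0, 0;
  0, 0, 0, -1, -7, -1, -1, 0, 0, -1, 0, -1;
  -1, 0, 0, 0, -1, -7, -1, 0, 0, 0, -1, -1;
  0, 0, 0, 0, -1, -1, -7, -1, 0, -1, -1, 0;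
  -1, 0, 0, -1, 0, 0, -1, -7, -1, 0, 0, 0;
  0, -1, -1, 0, 0, 0, 0, -1, -7, -1, 0, 0;
  0, 0, 0, 0, -1, 0, -1, 0, -1, -7, -1, -1;
  0, -1, 0, 0, 0, -1, -1, 0, 0, -1, -7, -1;
  0, 0, -1, 0, -1, -1, 0, 0, 0, -1, -1, -7]

def Em7 : Matrix (Fin 12) (Fin 12) ℤ :=
!![1, 0, 0, 0, 0, 0, 0, 0, 0, 0, 0, 0;
  1, -7, 0, 0, 0, 0, 0, 0, 0, 0, 0, 0;
  1, -7, 48, 0, 0, 0, 0, 0, 0, 0, 0, 0;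
  49, -14, 49, -329, 0, 0, 0, 0, 0, 0, 0, 0;
  49, -14, 49, -329, 2205, 0, 0, 0, 0, 0, 0, 0;
  2304, -350, 146, -672, 2254, -15106, 0, 0, 0, 0, 0, 0;
  1632, -204, -204, 1632, -12852, -12852, 101184, 0, 0, 0, 0, 0;
  89760, -11220, -11220, 89760, -24276, -24276, 104448, -682584, 0, 0, 0, 0;
  165240, -582420, -582420, 165240, -34476, -34476, 110568, -705024, 4494120, 0, 0, 0;
  495720, -651372, -506328, -374544, 3877224, -1199316, 4022268, -1244808, 4570212, -29588976, 0, 0;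
  8648394, -30669023, 3815928, -3608184, 11482452, -27572065, -21779519, 1310514, 7565711, -27417396, 194653128, 0;
  -11964681, -42001484, 199926741, -53438091, 156595848, 149683613, -92244612, 29508729, -48913719, 154962047, 154962047, -1255133893]

def Um7 : Matrix (Fin 12) (Fin 12) ℤ :=
!![-7, -1, 0, -1, 0, -1, 0, -1, 0, 0, 0, 0;
  0, 48, 7, -1, 0, -1, 0, -1, 7, 0, 7, 0;
  0, 0, -329, -49, 0, -1, 0, -1, -41, 0, 7, -48;
  0, 0, 0, 2205, 329, -49, 0, 280, -35, 0, 14, -49;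
  0, 0, 0, 0, -15106, -2254, -2205, 280, -35, -2205, 14, -2254;
  0, 0, 0, 0, 0, 101184, 12852, -1632, 204, -2254, 15456, 12706;
  0, 0, 0, 0, 0, 0, -682584, -104448, 408, -88332, -88128, 25908;
  0, 0, 0, 0, 0, 0, 0, 4494120, 705024, -80172, -68952, 59772;
  0, 0, 0, 0, 0, 0, 0, 0, -29588976, -4570212, 506328, 651372;
  0, 0, 0, 0, 0, 0, 0, 0, 0, 194653128, 27417396, 27417396;
  0, 0, 0, 0, 0, 0, 0, 0, 0, 0, -1255133893, -154962047;
  0, 0, 0, 0, 0, 0, 0, 0, 0, 0, 0, 7969806955]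

def Mm6 : Matrix (Fin 12) (Fin 12) ℤ :=
!![-6, -1, 0, -1, 0, -1, 0, -1, 0, 0, 0, 0;
  -1, -6, -1, 0, 0, 0, 0, 0, -1, 0, -1, 0;
  0, -1, -6, -1, 0, 0, 0, 0, -1, 0, 0, -1;
  -1, 0, -1, -6, -1, 0, 0, -1, 0, 0, 0, 0;
  0, 0, 0, -1, -6, -1, -1, 0, 0, -1, 0, -1;
  -1, 0, 0, 0, -1, -6, -1, 0, 0, 0, -1, -1;
  0, 0, 0, 0, -1, -1, -6, -1, 0, -1, -1, 0;
  -1, 0, 0, -1, 0, 0, -1, -6, -1, 0, 0, 0;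
  0, -1, -1, 0, 0, 0, 0, -1, -6, -1, 0, 0;
  0, 0, 0, 0, -1, 0, -1, 0, -1, -6, -1, -1;
  0, -1, 0, 0, 0, -1, -1, 0, 0, -1, -6, -1;
  0, 0, -1, 0, -1, -1, 0, 0, 0, -1, -1, -6]

def Em6 : Matrix (Fin 12) (Fin 12) ℤ :=
!![1, 0, 0, 0, 0, 0, 0, 0, 0, 0, 0, 0;
  1, -6, 0, 0, 0, 0, 0, 0, 0, 0, 0, 0;
  1, -6, 35, 0, 0, 0, 0, 0, 0, 0, 0, 0;
  36, -12, 36, -204, 0, 0, 0, 0, 0, 0, 0, 0;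
  36, -12, 36, -204, 1152, 0, 0, 0, 0, 0, 0, 0;
  1225, -222, 107, -420, 1188, -6708, 0, 0, 0, 0, 0, 0;
  805, -115, -115, 805, -5520, -5520, 37835, 0, 0, 0, 0, 0;
  33005, -4715, -4715, 33005, -10350, -10350, 39445, -215970, 0, 0, 0, 0;
  59800, -178595, -178595, 59800, -14605, -14605, 42435, -225400, 1190365, 0, 0, 0;
  179400, -207805, -150765, -105800, 997165, -371795, 1054205, -391000, 1218195, -6559600, 0, 0;
  2317530, -6894743, 1003395, -1085125, 2970470, -6144667, -4508033, 219355, 1959498, -6084995, 36088035, 0;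
  -2213408, -8720554, 37344422, -11810278, 28347192, 26427818, -19637158, 7383462, -10639928, 27832238, 27832238, -192895772]

def Um6 : Matrix (Fin 12) (Fin 12) ℤ :=
!![-6, -1, 0, -1, 0, -1, 0, -1, 0, 0, 0, 0;
  0, 35, 6, -1, 0, -1, 0, -1, 6, 0, 6, 0;
  0, 0, -204, -36, 0, -1, 0, -1, -29, 0, 6, -35;
  0, 0, 0, 1152, 204, -36, 0, 168, -24, 0, 12, -36;
  0, 0, 0, 0, -6708, -1188, -1152, 168, -24, -1152, 12, -1188;
  0, 0, 0, 0, 0, 37835, 5520, -805, 115, -1188, 6930, 5413;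
  0, 0, 0, 0, 0, 0, -215970, -39445, 230, -32315, -32200, 11155;
  0, 0, 0, 0, 0, 0, 0, 1190365, 225400, -29095, -24380, 25415;
  0, 0, 0, 0, 0, 0, 0, 0, -6559600, -1218195, 150765, 207805;
  0, 0, 0, 0, 0, 0, 0, 0, 0, 36088035, 6084995, 6084995;
  0, 0, 0, 0, 0, 0, 0, 0, 0, 0, -192895772, -27832238;
  0, 0, 0, 0, 0, 0, 0, 0, 0, 0, 0, 1009590724]

def Mm5 : Matrix (Fin 12) (Fin 12) ℤ :=
!![-5, -1, 0, -1, 0, -1, 0, -1, 0, 0, 0, 0;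
  -1, -5, -1, 0, 0, 0, 0, 0, -1, 0, -1, 0;
  0, -1, -5, -1, 0, 0, 0, 0, -1, 0, 0, -1;
  -1, 0, -1, -5, -1, 0, 0, -1, 0, 0, 0, 0;
  0, 0, 0, -1, -5, -1, -1, 0, 0, -1, 0, -1;
  -1, 0, 0, 0, -1, -5, -1, 0, 0, 0, -1, -1;
  0, 0, 0, 0, -1, -1, -5, -1, 0, -1, -1, 0;
  -1, 0, 0, -1, 0, 0, -1, -5, -1, 0, 0, 0;
  0, -1, -1, 0, 0, 0, 0, -1, -5, -1, 0, 0;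
  0, 0, 0, 0, -1, 0, -1, 0, -1, -5, -1, -1;
  0, -1, 0, 0, 0, -1, -1, 0, 0, -1, -5, -1;
  0, 0, -1, 0, -1, -1, 0, 0, 0, -1, -1, -5]

def Em5 : Matrix (Fin 12) (Fin 12) ℤ :=
!![1, 0, 0, 0, 0, 0, 0, 0, 0, 0, 0, 0;
  1, -5, 0, 0, 0, 0, 0, 0, 0, 0, 0, 0;
  1, -5, 24, 0, 0, 0, 0, 0, 0, 0, 0, 0;
  25, -10, 25, -115, 0, 0, 0, 0, 0, 0, 0, 0;
  25, -10, 25, -115, 525, 0, 0, 0, 0, 0, 0, 0;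
  576, -130, 74, -240, 550, -2510, 0, 0, 0, 0, 0, 0;
  336, -56, -56, 336, -1960, -1960, 11424, 0, 0, 0, 0, 0;
  9744, -1624, -1624, 9744, -3640, -3640, 12096, -53200, 0, 0, 0, 0;
  17248, -41944, -41944, 17248, -5096, -5096, 13328, -56448, 234416, 0, 0, 0;
  51744, -52136, -33712, -21952, 187376, -88984, 205800, -95648, 242648, -1031744, 0, 0;
  467796, -1112573, 196952, -247408, 565712, -985579, -628509, 6580, 375221, -967064, 4522896, 0;
  -260743, -1233656, 4727149, -1850291, 3456244, 3058857, -2901948, 1328805, -1631043, 3332917, 3332917, -18920755]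

def Um5 : Matrix (Fin 12) (Fin 12) ℤ :=
!![-5, -1, 0, -1, 0, -1, 0, -1, 0, 0, 0, 0;
  0, 24, 5, -1, 0, -1, 0, -1, 5, 0, 5, 0;
  0, 0, -115, -25, 0, -1, 0, -1, -19, 0, 5, -24;
  0, 0, 0, 525, 115, -25, 0, 90, -15, 0, 10, -25;
  0, 0, 0, 0, -2510, -550, -525, 90, -15, -525, 10, -550;
  0, 0, 0, 0, 0, 11424, 1960, -336, 56, -550, 2640, 1886;
  0, 0, 0, 0, 0, 0, -53200, -12096, 112, -9464, -9408, 3976;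
  0, 0, 0, 0, 0, 0, 0, 234416, 56448, -8456, -6832, 8904;
  0, 0, 0, 0, 0, 0, 0, 0, -1031744, -242648, 33712, 52136;
  0, 0, 0, 0, 0, 0, 0, 0, 0, 4522896, 967064, 967064;
  0, 0, 0, 0, 0, 0, 0, 0, 0, 0, -18920755, -3332917;
  0, 0, 0, 0, 0, 0, 0, 0, 0, 0, 0, 76695691]

def Mm4 : Matrix (Fin 12) (Fin 12) ℤ :=
!![-4, -1, 0, -1, 0, -1, 0, -1, 0, 0, 0, 0;
  -1, -4, -1, 0, 0, 0, 0, 0, -1, 0, -1, 0;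
  0, -1, -4, -1, 0, 0, 0, 0, -1, 0, 0, -1;
  -1, 0, -1, -4, -1, 0, 0, -1, 0, 0, 0, 0;
  0, 0, 0, -1, -4, -1, -1, 0, 0, -1, 0, -1;
  -1, 0, 0, 0, -1, -4, -1, 0, 0, 0, -1, -1;
  0, 0, 0, 0, -1, -1, -4, -1, 0, -1, -1, 0;
  -1, 0, 0, -1, 0, 0, -1, -4, -1, 0, 0, 0;
  0, -1, -1, 0, 0, 0, 0, -1, -4, -1, 0, 0;
  0, 0, 0, 0, -1, 0, -1, 0, -1, -4, -1, -1;
  0, -1, 0, 0, 0, -1, -1, 0, 0, -1, -4, -1;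
  0, 0, -1, 0, -1, -1, 0, 0, 0, -1, -1, -4]

def Em4 : Matrix (Fin 12) (Fin 12) ℤ :=
!![1, 0, 0, 0, 0, 0, 0, 0, 0, 0, 0, 0;
  1, -4, 0, 0, 0, 0, 0, 0, 0, 0, 0, 0;
  1, -4, 15, 0, 0, 0, 0, 0, 0, 0, 0, 0;
  16, -8, 16, -56, 0, 0, 0, 0, 0, 0, 0, 0;
  16, -8, 16, -56, 192, 0, 0, 0, 0, 0, 0, 0;
  225, -68, 47, -120, 208, -712, 0, 0, 0, 0, 0, 0;
  105, -21, -21, 105, -504, -504, 2415, 0, 0, 0, 0, 0;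
  1995, -399, -399, 1995, -924, -924, 2625, -8652, 0, 0, 0, 0;
  3402, -6279, -6279, 3402, -1281, -1281, 3003, -9450, 27993, 0, 0, 0;
  10206, -8841, -4557, -2646, 20433, -13839, 24717, -15498, 29715, -89964, 0, 0;
  59070, -102773, 23553, -34917, 63810, -91825, -40571, -6765, 43478, -87927, 284991, 0;
  -12696, -86066, 298494, -156906, 210312, 162242, -222318, 131514, -134136, 192602, 192602, -816868]

def Um4 : Matrix (Fin 12) (Fin 12) ℤ :=
!![-4, -1, 0, -1, 0, -1, 0, -1, 0, 0, 0, 0;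
  0, 15, 4, -1, 0, -1, 0, -1, 4, 0, 4, 0;
  0, 0, -56, -16, 0, -1, 0, -1, -11, 0, 4, -15;
  0, 0, 0, 192, 56, -16, 0, 40, -8, 0, 8, -16;
  0, 0, 0, 0, -712, -208, -192, 40, -8, -192, 8, -208;
  0, 0, 0, 0, 0, 2415, 504, -105, 21, -208, 780, 457;
  0, 0, 0, 0, 0, 0, -8652, -2625, 42, -1911, -1890, 1029;
  0, 0, 0, 0, 0, 0, 0, 27993, 9450, -1701, -1302, 2247;
  0, 0, 0, 0, 0, 0, 0, 0, -89964, -29715, 4557, 8841;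
  0, 0, 0, 0, 0, 0, 0, 0, 0, 284991, 87927, 87927;
  0, 0, 0, 0, 0, 0, 0, 0, 0, 0, -816868, -192602;
  0, 0, 0, 0, 0, 0, 0, 0, 0, 0, 0, 2211220]

def Mm3 : Matrix (Fin 12) (Fin 12) ℤ :=
!![-3, -1, 0, -1, 0, -1, 0, -1, 0, 0, 0, 0;
  -1, -3, -1, 0, 0, 0, 0, 0, -1, 0, -1, 0;
  0, -1, -3, -1, 0, 0, 0, 0, -1, 0, 0, -1;
  -1, 0, -1, -3, -1, 0, 0, -1, 0, 0, 0, 0;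
  0, 0, 0, -1, -3, -1, -1, 0, 0, -1, 0, -1;
  -1, 0, 0, 0, -1, -3, -1, 0, 0, 0, -1, -1;
  0, 0, 0, 0, -1, -1, -3, -1, 0, -1, -1, 0;
  -1, 0, 0, -1, 0, 0, -1, -3, -1, 0, 0, 0;
  0, -1, -1, 0, 0, 0, 0, -1, -3, -1, 0, 0;
  0, 0, 0, 0, -1, 0, -1, 0, -1, -3, -1, -1;
  0, -1, 0, 0, 0, -1, -1, 0, 0, -1, -3, -1;
  0, 0, -1, 0, -1, -1, 0, 0, 0, -1, -1, -3]

def Em3 : Matrix (Fin 12) (Fin 12) ℤ :=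
!![1, 0, 0, 0, 0, 0, 0, 0, 0, 0, 0, 0;
  1, -3, 0, 0, 0, 0, 0, 0, 0, 0, 0, 0;
  1, -3, 8, 0, 0, 0, 0, 0, 0, 0, 0, 0;
  9, -6, 9, -21, 0, 0, 0, 0, 0, 0, 0, 0;
  9, -6, 9, -21, 45, 0, 0, 0, 0, 0, 0, 0;
  64, -30, 26, -48, 54, -114, 0, 0, 0, 0, 0, 0;
  16, -4, -4, 16, -60, -60, 224, 0, 0, 0, 0, 0;
  176, -44, -44, 176, -108, -108, 256, -552, 0, 0, 0, 0;
  280, -332, -332, 280, -148, -148, 312, -640, 1048, 0, 0, 0;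
  840, -628, -168, -80, 568, -812, 1028, -1000, 1212, -1840, 0, 0;
  2502, -2555, 720, -1336, 1892, -2509, 421, -1106, 1731, -2252, 2712, 0;
  -5, -292, 1061, -907, 768, 317, -1036, 897, -743, 563, 563, -1241]

def Um3 : Matrix (Fin 12) (Fin 12) ℤ :=
!![-3, -1, 0, -1, 0, -1, 0, -1, 0, 0, 0, 0;
  0, 8, 3, -1, 0, -1, 0, -1, 3, 0, 3, 0;
  0, 0, -21, -9, 0, -1, 0, -1, -5, 0, 3, -8;
  0, 0, 0, 45, 21, -9, 0, 12, -3, 0, 6, -9;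
  0, 0, 0, 0, -114, -54, -45, 12, -3, -45, 6, -54;
  0, 0, 0, 0, 0, 224, 60, -16, 4, -54, 144, 34;
  0, 0, 0, 0, 0, 0, -552, -256, 8, -164, -160, 124;
  0, 0, 0, 0, 0, 0, 0, 1048, 640, -148, -104, 260;
  0, 0, 0, 0, 0, 0, 0, 0, -1840, -1212, 168, 628;
  0, 0, 0, 0, 0, 0, 0, 0, 0, 2712, 2252, 2252;
  0, 0, 0, 0, 0, 0, 0, 0, 0, 0, -1241, -563;
  0, 0, 0, 0, 0, 0, 0, 0, 0, 0, 0, 451]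

def M3 : Matrix (Fin 12) (Fin 12) ℤ :=
!![3, -1, 0, -1, 0, -1, 0, -1, 0, 0, 0, 0;
  -1, 3, -1, 0, 0, 0, 0, 0, -1, 0, -1, 0;
  0, -1, 3, -1, 0, 0, 0, 0, -1, 0, 0, -1;
  -1, 0, -1, 3, -1, 0, 0, -1, 0, 0, 0, 0;
  0, 0, 0, -1, 3, -1, -1, 0, 0, -1, 0, -1;
  -1, 0, 0, 0, -1, 3, -1, 0, 0, 0, -1, -1;
  0, 0, 0, 0, -1, -1, 3, -1, 0, -1, -1, 0;
  -1, 0, 0, -1, 0, 0, -1, 3, -1, 0, 0, 0;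
  0, -1, -1, 0, 0, 0, 0, -1, 3, -1, 0, 0;
  0, 0, 0, 0, -1, 0, -1, 0, -1, 3, -1, -1;
  0, -1, 0, 0, 0, -1, -1, 0, 0, -1, 3, -1;
  0, 0, -1, 0, -1, -1, 0, 0, 0, -1, -1, 3]

def E3 : Matrix (Fin 12) (Fin 12) ℤ :=
!![1, 0, 0, 0, 0, 0, 0, 0, 0, 0, 0, 0;
  1, 3, 0, 0, 0, 0, 0, 0, 0, 0, 0, 0;
  1, 3, 8, 0, 0, 0, 0, 0, 0, 0, 0, 0;
  9, 6, 9, 21, 0, 0, 0, 0, 0, 0, 0, 0;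
  9, 6, 9, 21, 45, 0, 0, 0, 0, 0, 0, 0;
  64, 30, 26, 48, 54, 114, 0, 0, 0, 0, 0, 0;
  112, 56, 56, 112, 168, 168, 224, 0, 0, 0, 0, 0;
  560, 280, 280, 560, 504, 504, 448, 336, 0, 0, 0, 0;
  1120, 280, 280, 1120, 1064, 1064, 1008, 896, -560, 0, 0, 0;
  3360, 2408, 2352, 3136, 784, 1624, 728, 2912, 1512, -3136, 0, 0;
  9804, 4747, 8328, 11696, 6032, 2045, 2731, 10924, 8541, 1624, -12432, 0;
  37249, 29336, 14861, 33389, 6948, 7913, 22388, 41109, 30301, 5597, 5597, -48443]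

def U3 : Matrix (Fin 12) (Fin 12) ℤ :=
!![3, -1, 0, -1, 0, -1, 0, -1, 0, 0, 0, 0;
  0, 8, -3, -1, 0, -1, 0, -1, -3, 0, -3, 0;
  0, 0, 21, -9, 0, -1, 0, -1, -11, 0, -3, -8;
  0, 0, 0, 45, -21, -9, 0, -30, -15, 0, -6, -9;
  0, 0, 0, 0, 114, -54, -45, -30, -15, -45, -6, -54;
  0, 0, 0, 0, 0, 224, -168, -112, -56, -54, -144, -194;
  0, 0, 0, 0, 0, 0, 336, -448, -112, -392, -448, -392;
  0, 0, 0, 0, 0, 0, 0, -560, -896, -952, -1232, -1288;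
  0, 0, 0, 0, 0, 0, 0, 0, -3136, -1512, -2352, -2408;
  0, 0, 0, 0, 0, 0, 0, 0, 0, -12432, -1624, -1624;
  0, 0, 0, 0, 0, 0, 0, 0, 0, 0, -48443, -5597;
  0, 0, 0, 0, 0, 0, 0, 0, 0, 0, 0, -186245]

def M4 : Matrix (Fin 12) (Fin 12) ℤ :=
!![4, -1, 0, -1, 0, -1, 0, -1, 0, 0, 0, 0;
  -1, 4, -1, 0, 0, 0, 0, 0, -1, 0, -1, 0;
  0, -1, 4, -1, 0, 0, 0, 0, -1, 0, 0, -1;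
  -1, 0, -1, 4, -1, 0, 0, -1, 0, 0, 0, 0;
  0, 0, 0, -1, 4, -1, -1, 0, 0, -1, 0, -1;
  -1, 0, 0, 0, -1, 4, -1, 0, 0, 0, -1, -1;
  0, 0, 0, 0, -1, -1, 4, -1, 0, -1, -1, 0;
  -1, 0, 0, -1, 0, 0, -1, 4, -1, 0, 0, 0;
  0, -1, -1, 0, 0, 0, 0, -1, 4, -1, 0, 0;
  0, 0, 0, 0, -1, 0, -1, 0, -1, 4, -1, -1;
  0, -1, 0, 0, 0, -1, -1, 0, 0, -1, 4, -1;
  0, 0, -1, 0, -1, -1, 0, 0, 0, -1, -1, 4]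

def E4 : Matrix (Fin 12) (Fin 12) ℤ :=
!![1, 0, 0, 0, 0, 0, 0, 0, 0, 0, 0, 0;
  1, 4, 0, 0, 0, 0, 0, 0, 0, 0, 0, 0;
  1, 4, 15, 0, 0, 0, 0, 0, 0, 0, 0, 0;
  16, 8, 16, 56, 0, 0, 0, 0, 0, 0, 0, 0;
  16, 8, 16, 56, 192, 0, 0, 0, 0, 0, 0, 0;
  225, 68, 47, 120, 208, 712, 0, 0, 0, 0, 0, 0;
  345, 115, 115, 345, 920, 920, 2415, 0, 0, 0, 0, 0;
  3795, 1265, 1265, 3795, 2300, 2300, 3105, 7820, 0, 0, 0, 0;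
  8050, 9545, 9545, 8050, 4255, 4255, 4715, 10350, 20585, 0, 0, 0;
  24150, 18055, 18515, 26450, 34385, 23345, 34845, 28750, 29555, 52900, 0, 0;
  120270, 107107, 83705, 116075, 133730, 131303, 158397, 126595, 111638, 129145, 112815, 0;
  553352, 505486, 366622, 524422, 595432, 601218, 740082, 582282, 511272, 590698, 590698, -74692]

def U4 : Matrix (Fin 12) (Fin 12) ℤ :=
!![4, -1, 0, -1, 0, -1, 0, -1, 0, 0, 0, 0;
  0, 15, -4, -1, 0, -1, 0, -1, -4, 0, -4, 0;
  0, 0, 56, -16, 0, -1, 0, -1, -19, 0, -4, -15;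
  0, 0, 0, 192, -56, -16, 0, -72, -24, 0, -8, -16;
  0, 0, 0, 0, 712, -208, -192, -72, -24, -192, -8, -208;
  0, 0, 0, 0, 0, 2415, -920, -345, -115, -208, -780, -967;
  0, 0, 0, 0, 0, 0, 7820, -3105, -230, -3335, -3450, -1955;
  0, 0, 0, 0, 0, 0, 0, 20585, -10350, -5405, -6670, -5865;
  0, 0, 0, 0, 0, 0, 0, 0, 52900, -29555, -18515, -18055;
  0, 0, 0, 0, 0, 0, 0, 0, 0, 112815, -129145, -129145;
  0, 0, 0, 0, 0, 0, 0, 0, 0, 0, -74692, -590698;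
  0, 0, 0, 0, 0, 0, 0, 0, 0, 0, 0, -3043436]

def M5 : Matrix (Fin 12) (Fin 12) ℤ :=
!![5, -1, 0, -1, 0, -1, 0, -1, 0, 0, 0, 0;
  -1, 5, -1, 0, 0, 0, 0, 0, -1, 0, -1, 0;
  0, -1, 5, -1, 0, 0, 0, 0, -1, 0, 0, -1;
  -1, 0, -1, 5, -1, 0, 0, -1, 0, 0, 0, 0;
  0, 0, 0, -1, 5, -1, -1, 0, 0, -1, 0, -1;
  -1, 0, 0, 0, -1, 5, -1, 0, 0, 0, -1, -1;
  0, 0, 0, 0, -1, -1, 5, -1, 0, -1, -1, 0;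
  -1, 0, 0, -1, 0, 0, -1, 5, -1, 0, 0, 0;
  0, -1, -1, 0, 0, 0, 0, -1, 5, -1, 0, 0;
  0, 0, 0, 0, -1, 0, -1, 0, -1, 5, -1, -1;
  0, -1, 0, 0, 0, -1, -1, 0, 0, -1, 5, -1;
  0, 0, -1, 0, -1, -1, 0, 0, 0, -1, -1, 5]

def E5 : Matrix (Fin 12) (Fin 12) ℤ :=
!![1, 0, 0, 0, 0, 0, 0, 0, 0, 0, 0, 0;
  1, 5, 0, 0, 0, 0, 0, 0, 0, 0, 0, 0;
  1, 5, 24, 0, 0, 0, 0, 0, 0, 0, 0, 0;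
  25, 10, 25, 115, 0, 0, 0, 0, 0, 0, 0, 0;
  25, 10, 25, 115, 525, 0, 0, 0, 0, 0, 0, 0;
  576, 130, 74, 240, 550, 2510, 0, 0, 0, 0, 0, 0;
  816, 204, 204, 816, 3060, 3060, 11424, 0, 0, 0, 0, 0;
  15504, 3876, 3876, 15504, 7140, 7140, 13056, 51000, 0, 0, 0, 0;
  33048, 60996, 60996, 33048, 12444, 12444, 16728, 58752, 210936, 0, 0, 0;
  99144, 85884, 90168, 124848, 284376, 134436, 288660, 150552, 240108, 873936, 0, 0;
  769566, 1113037, 492192, 601032, 997092, 1387451, 1614061, 746310, 746891, 1382916, 3556536, 0;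
  3988227, 4183084, 4949829, 4119669, 7803504, 7781597, 7014852, 3856785, 4161177, 7816187, 7816187, 12285215]

def U5 : Matrix (Fin 12) (Fin 12) ℤ :=
!![5, -1, 0, -1, 0, -1, 0, -1, 0, 0, 0, 0;
  0, 24, -5, -1, 0, -1, 0, -1, -5, 0, -5, 0;
  0, 0, 115, -25, 0, -1, 0, -1, -29, 0, -5, -24;
  0, 0, 0, 525, -115, -25, 0, -140, -35, 0, -10, -25;
  0, 0, 0, 0, 2510, -550, -525, -140, -35, -525, -10, -550;
  0, 0, 0, 0, 0, 11424, -3060, -816, -204, -550, -2640, -3134;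
  0, 0, 0, 0, 0, 0, 51000, -13056, -408, -14484, -14688, -6324;
  0, 0, 0, 0, 0, 0, 0, 210936, -58752, -20196, -24072, -18156;
  0, 0, 0, 0, 0, 0, 0, 0, 873936, -240108, -90168, -85884;
  0, 0, 0, 0, 0, 0, 0, 0, 0, 3556536, -1382916, -1382916;
  0, 0, 0, 0, 0, 0, 0, 0, 0, 0, 12285215, -7816187;
  0, 0, 0, 0, 0, 0, 0, 0, 0, 0, 0, 25258771]

def M6 : Matrix (Fin 12) (Fin 12) ℤ :=
!![6, -1, 0, -1, 0, -1, 0, -1, 0, 0, 0, 0;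
  -1, 6, -1, 0, 0, 0, 0, 0, -1, 0, -1, 0;
  0, -1, 6, -1, 0, 0, 0, 0, -1, 0, 0, -1;
  -1, 0, -1, 6, -1, 0, 0, -1, 0, 0, 0, 0;
  0, 0, 0, -1, 6, -1, -1, 0, 0, -1, 0, -1;
  -1, 0, 0, 0, -1, 6, -1, 0, 0, 0, -1, -1;
  0, 0, 0, 0, -1, -1, 6, -1, 0, -1, -1, 0;
  -1, 0, 0, -1, 0, 0, -1, 6, -1, 0, 0, 0;
  0, -1, -1, 0, 0, 0, 0, -1, 6, -1, 0, 0;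
  0, 0, 0, 0, -1, 0, -1, 0, -1, 6, -1, -1;
  0, -1, 0, 0, 0, -1, -1, 0, 0, -1, 6, -1;
  0, 0, -1, 0, -1, -1, 0, 0, 0, -1, -1, 6]

def E6 : Matrix (Fin 12) (Fin 12) ℤ :=
!![1, 0, 0, 0, 0, 0, 0, 0, 0, 0, 0, 0;
  1, 6, 0, 0, 0, 0, 0, 0, 0, 0, 0, 0;
  1, 6, 35, 0, 0, 0, 0, 0, 0, 0, 0, 0;
  36, 12, 36, 204, 0, 0, 0, 0, 0, 0, 0, 0;
  36, 12, 36, 204, 1152, 0, 0, 0, 0, 0, 0, 0;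
  1225, 222, 107, 420, 1188, 6708, 0, 0, 0, 0, 0, 0;
  1645, 329, 329, 1645, 7896, 7896, 37835, 0, 0, 0, 0, 0;
  47705, 9541, 9541, 47705, 17766, 17766, 41125, 211218, 0, 0, 0, 0;
  101332, 246421, 246421, 101332, 29939, 29939, 48363, 230300, 1130773, 0, 0, 0;
  303996, 306299, 324723, 432964, 1407133, 522781, 1425557, 561932, 1209075, 6061496, 0, 0;
  3413970, 6868477, 2079063, 2215283, 4718630, 8320025, 9460339, 3080035, 3390618, 8316133, 32327211, 0;
  19465744, 22565174, 37918934, 21704834, 55617672, 55297802, 39944042, 17226654, 22245304, 55761062, 55761062, 160998292]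

def U6 : Matrix (Fin 12) (Fin 12) ℤ :=
!![6, -1, 0, -1, 0, -1, 0, -1, 0, 0, 0, 0;
  0, 35, -6, -1, 0, -1, 0, -1, -6, 0, -6, 0;
  0, 0, 204, -36, 0, -1, 0, -1, -41, 0, -6, -35;
  0, 0, 0, 1152, -204, -36, 0, -240, -48, 0, -12, -36;
  0, 0, 0, 0, 6708, -1188, -1152, -240, -48, -1152, -12, -1188;
  0, 0, 0, 0, 0, 37835, -7896, -1645, -329, -1188, -6930, -8003;
  0, 0, 0, 0, 0, 0, 211218, -41125, -658, -45731, -46060, -16121;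
  0, 0, 0, 0, 0, 0, 0, 1130773, -230300, -58891, -68432, -45073;
  0, 0, 0, 0, 0, 0, 0, 0, 6061496, -1209075, -324723, -306299;
  0, 0, 0, 0, 0, 0, 0, 0, 0, 32327211, -8316133, -8316133;
  0, 0, 0, 0, 0, 0, 0, 0, 0, 0, 160998292, -55761062;
  0, 0, 0, 0, 0, 0, 0, 0, 0, 0, 0, 705633220]

def M7 : Matrix (Fin 12) (Fin 12) ℤ :=
!![7, -1, 0, -1, 0, -1, 0, -1, 0, 0, 0, 0;
  -1, 7, -1, 0, 0, 0, 0, 0, -1, 0, -1, 0;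
  0, -1, 7, -1, 0, 0, 0, 0, -1, 0, 0, -1;
  -1, 0, -1, 7, -1, 0, 0, -1, 0, 0, 0, 0;
  0, 0, 0, -1, 7, -1, -1, 0, 0, -1, 0, -1;
  -1, 0, 0, 0, -1, 7, -1, 0, 0, 0, -1, -1;
  0, 0, 0, 0, -1, -1, 7, -1, 0, -1, -1, 0;
  -1, 0, 0, -1, 0, 0, -1, 7, -1, 0, 0, 0;
  0, -1, -1, 0, 0, 0, 0, -1, 7, -1, 0, 0;
  0, 0, 0, 0, -1, 0, -1, 0, -1, 7, -1, -1;
  0, -1, 0, 0, 0, -1, -1, 0, 0, -1, 7, -1;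
  0, 0, -1, 0, -1, -1, 0, 0, 0, -1, -1, 7]

def E7 : Matrix (Fin 12) (Fin 12) ℤ :=
!![1, 0, 0, 0, 0, 0, 0, 0, 0, 0, 0, 0;
  1, 7, 0, 0, 0, 0, 0, 0, 0, 0, 0, 0;
  1, 7, 48, 0, 0, 0, 0, 0, 0, 0, 0, 0;
  49, 14, 49, 329, 0, 0, 0, 0, 0, 0, 0, 0;
  49, 14, 49, 329, 2205, 0, 0, 0, 0, 0, 0, 0;
  2304, 350, 146, 672, 2254, 15106, 0, 0, 0, 0, 0, 0;
  2976, 496, 496, 2976, 17360, 17360, 101184, 0, 0, 0, 0, 0;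
  122016, 20336, 20336, 122016, 38192, 38192, 107136, 673568, 0, 0, 0, 0;
  257920, 770288, 770288, 257920, 62992, 62992, 120032, 714240, 4363808, 0, 0, 0;
  773760, 896272, 953312, 1230080, 5197088, 1603568, 5254128, 1686400, 4546832, 28291840, 0, 0;
  11896632, 30559375, 7013360, 6573344, 16996352, 36036641, 40318671, 10107064, 11960801, 36045808, 183044832, 0;
  73766405, 92061088, 201195421, 87624733, 278503228, 276770937, 167636604, 59908077, 90328797, 279136993, 279136993, 1138353329]

def U7 : Matrix (Fin 12) (Fin 12) ℤ :=
!![7, -1, 0, -1, 0, -1, 0, -1, 0, 0, 0, 0;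
  0, 48, -7, -1, 0, -1, 0, -1, -7, 0, -7, 0;
  0, 0, 329, -49, 0, -1, 0, -1, -55, 0, -7, -48;
  0, 0, 0, 2205, -329, -49, 0, -378, -63, 0, -14, -49;
  0, 0, 0, 0, 15106, -2254, -2205, -378, -63, -2205, -14, -2254;
  0, 0, 0, 0, 0, 101184, -17360, -2976, -496, -2254, -15456, -17506;
  0, 0, 0, 0, 0, 0, 673568, -107136, -992, -118544, -119040, -35216;
  0, 0, 0, 0, 0, 0, 0, 4363808, -714240, -145328, -165664, -96720;
  0, 0, 0, 0, 0, 0, 0, 0, 28291840, -4546832, -953312, -896272;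
  0, 0, 0, 0, 0, 0, 0, 0, 0, 183044832, -36045808, -36045808;
  0, 0, 0, 0, 0, 0, 0, 0, 0, 0, 1138353329, -279136993;
  0, 0, 0, 0, 0, 0, 0, 0, 0, 0, 0, 6653729731]

def M8 : Matrix (Fin 12) (Fin 12) ℤ :=
!![8, -1, 0, -1, 0, -1, 0, -1, 0, 0, 0, 0;
  -1, 8, -1, 0, 0, 0, 0, 0, -1, 0, -1, 0;
  0, -1, 8, -1, 0, 0, 0, 0, -1, 0, 0, -1;
  -1, 0, -1, 8, -1, 0, 0, -1, 0, 0, 0, 0;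
  0, 0, 0, -1, 8, -1, -1, 0, 0, -1, 0, -1;
  -1, 0, 0, 0, -1, 8, -1, 0, 0, 0, -1, -1;
  0, 0, 0, 0, -1, -1, 8, -1, 0, -1, -1, 0;
  -1, 0, 0, -1, 0, 0, -1, 8, -1, 0, 0, 0;
  0, -1, -1, 0, 0, 0, 0, -1, 8, -1, 0, 0;
  0, 0, 0, 0, -1, 0, -1, 0, -1, 8, -1, -1;
  0, -1, 0, 0, 0, -1, -1, 0, 0, -1, 8, -1;
  0, 0, -1, 0, -1, -1, 0, 0, 0, -1, -1, 8]

def E8 : Matrix (Fin 12) (Fin 12) ℤ :=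
!![1, 0, 0, 0, 0, 0, 0, 0, 0, 0, 0, 0;
  1, 8, 0, 0, 0, 0, 0, 0, 0, 0, 0, 0;
  1, 8, 63, 0, 0, 0, 0, 0, 0, 0, 0, 0;
  64, 16, 64, 496, 0, 0, 0, 0, 0, 0, 0, 0;
  64, 16, 64, 496, 3840, 0, 0, 0, 0, 0, 0, 0;
  3969, 520, 191, 1008, 3904, 30224, 0, 0, 0, 0, 0, 0;
  4977, 711, 711, 4977, 34128, 34128, 233919, 0, 0, 0, 0, 0;
  273735, 39105, 39105, 273735, 73944, 73944, 243873, 1803096, 0, 0, 0, 0;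
  575910, 2029905, 2029905, 575910, 120159, 120159, 265203, 1881306, 13633425, 0, 0, 0;
  1727730, 2270223, 2415267, 3033126, 15783489, 4179969, 15928533, 4338522, 14018787, 103126284, 0, 0;
  34886934, 108696607, 20094453, 16747011, 50794722, 125451875, 138653881, 28199979, 35312006, 125505009, 779279463, 0;
  233475864, 308263246, 829760046, 292144254, 1099110648, 1092591938, 571095138, 174807474, 301744536, 1101125522, 1101125522, 5735928332]

def U8 : Matrix (Fin 12) (Fin 12) ℤ :=
!![8, -1, 0, -1, 0, -1, 0, -1, 0, 0, 0, 0;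
  0, 63, -8, -1, 0, -1, 0, -1, -8, 0, -8, 0;
  0, 0, 496, -64, 0, -1, 0, -1, -71, 0, -8, -63;
  0, 0, 0, 3840, -496, -64, 0, -560, -80, 0, -16, -64;
  0, 0, 0, 0, 30224, -3904, -3840, -560, -80, -3840, -16, -3904;
  0, 0, 0, 0, 0, 233919, -34128, -4977, -711, -3904, -30744, -34319;
  0, 0, 0, 0, 0, 0, 1803096, -243873, -1422, -268047, -268758, -68967;
  0, 0, 0, 0, 0, 0, 0, 13633425, -1881306, -317817, -356922, -186993;
  0, 0, 0, 0, 0, 0, 0, 0, 103126284, -14018787, -2415267, -2270223;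
  0, 0, 0, 0, 0, 0, 0, 0, 0, 779279463, -125505009, -125505009;
  0, 0, 0, 0, 0, 0, 0, 0, 0, 0, 5735928332, -1101125522;
  0, 0, 0, 0, 0, 0, 0, 0, 0, 0, 0, 40663712980]

def M9 : Matrix (Fin 12) (Fin 12) ℤ :=
!![9, -1, 0, -1, 0, -1, 0, -1, 0, 0, 0, 0;
  -1, 9, -1, 0, 0, 0, 0, 0, -1, 0, -1, 0;
  0, -1, 9, -1, 0, 0, 0, 0, -1, 0, 0, -1;
  -1, 0, -1, 9, -1, 0, 0, -1, 0, 0, 0, 0;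
  0, 0, 0, -1, 9, -1, -1, 0, 0, -1, 0, -1;
  -1, 0, 0, 0, -1, 9, -1, 0, 0, 0, -1, -1;
  0, 0, 0, 0, -1, -1, 9, -1, 0, -1, -1, 0;
  -1, 0, 0, -1, 0, 0, -1, 9, -1, 0, 0, 0;
  0, -1, -1, 0, 0, 0, 0, -1, 9, -1, 0, 0;
  0, 0, 0, 0, -1, 0, -1, 0, -1, 9, -1, -1;
  0, -1, 0, 0, 0, -1, -1, 0, 0, -1, 9, -1;
  0, 0, -1, 0, -1, -1, 0, 0, 0, -1, -1, 9]

def E9 : Matrix (Fin 12) (Fin 12) ℤ :=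
!![1, 0, 0, 0, 0, 0, 0, 0, 0, 0, 0, 0;
  1, 9, 0, 0, 0, 0, 0, 0, 0, 0, 0, 0;
  1, 9, 80, 0, 0, 0, 0, 0, 0, 0, 0, 0;
  81, 18, 81, 711, 0, 0, 0, 0, 0, 0, 0, 0;
  81, 18, 81, 711, 6237, 0, 0, 0, 0, 0, 0, 0;
  6400, 738, 242, 1440, 6318, 55422, 0, 0, 0, 0, 0, 0;
  7840, 980, 980, 7840, 61740, 61740, 486080, 0, 0, 0, 0, 0;
  556640, 69580, 69580, 556640, 132300, 132300, 501760, 4251240, 0, 0, 0, 0;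
  1166200, 4726540, 4726540, 1166200, 212660, 212660, 535080, 4390400, 36646120, 0, 0, 0;
  3498600, 5151860, 5474280, 6722800, 41585320, 9665740, 41907740, 9947000, 37393860, 315971600, 0, 0;
  89844090, 328315057, 50852760, 38078600, 132344660, 372537263, 407789137, 69665890, 91281183, 372696940, 2722857480, 0;
  645254407, 890550356, 2847627797, 842938997, 3645998952, 3626230493, 1669153052, 447569817, 870781897, 3651289103, 3651289103, 23024378923]

def U9 : Matrix (Fin 12) (Fin 12) ℤ :=
!![9, -1, 0, -1, 0, -1, 0, -1, 0, 0, 0, 0;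
  0, 80, -9, -1, 0, -1, 0, -1, -9, 0, -9, 0;
  0, 0, 711, -81, 0, -1, 0, -1, -89, 0, -9, -80;
  0, 0, 0, 6237, -711, -81, 0, -792, -99, 0, -18, -81;
  0, 0, 0, 0, 55422, -6318, -6237, -792, -99, -6237, -18, -6318;
  0, 0, 0, 0, 0, 486080, -61740, -7840, -980, -6318, -56160, -61982;
  0, 0, 0, 0, 0, 0, 4251240, -501760, -1960, -547820, -548800, -124460;
  0, 0, 0, 0, 0, 0, 0, 36646120, -4390400, -634060, -703640, -334180;
  0, 0, 0, 0, 0, 0, 0, 0, 315971600, -37393860, -5474280, -5151860;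
  0, 0, 0, 0, 0, 0, 0, 0, 0, 2722857480, -372696940, -372696940;
  0, 0, 0, 0, 0, 0, 0, 0, 0, 0, 23024378923, -3651289103;
  0, 0, 0, 0, 0, 0, 0, 0, 0, 0, 0, 189796974859]

lemma evm8 : (H7.adjMatrix ℤ).charpoly.eval (-8) = 45262721236 := by
  rw [eval_cp, show Matrix.diagonal (fun _ => (-8:ℤ)) - H7.adjMatrix ℤ = Mm8 from by decide]
  exact detEMU Mm8 Em8 Um8 (45262721236) (89680102557186575419085942253245899186047599585120590233600) (4059165482461826711635576878135062851018231800648262529187220920729600) (by decide) (by unfold Matrix.BlockTriangular; decide) (by unfold Matrix.BlockTriangular; decide) (by decide) (by decide) (by decide) (by decide)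

lemma evm7 : (H7.adjMatrix ℤ).charpoly.eval (-7) = 7969806955 := by
  rw [eval_cp, show Matrix.diagonal (fun _ => (-7:ℤ)) - H7.adjMatrix ℤ = Mm7 from by decide]
  exact detEMU Mm7 Em7 Um7 (7969806955) (8262039022937056842667006723429852069710872146712985600) (65846856067485160151917850933422996479802853673988933023694848000) (by decide) (by unfold Matrix.BlockTriangular; decide) (by unfold Matrix.BlockTriangular; decide) (by decide) (by decide) (by decide) (by decide)

lemma evm6 : (H7.adjMatrix ℤ).charpoly.eval (-6) = 1009590724 := by
  rw [eval_cp, show Matrix.diagonal (fun _ => (-6:ℤ)) - H7.adjMatrix ℤ = Mm6 from by decide]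
  exact detEMU Mm6 Em6 Um6 (1009590724) (147036654196155044727667068934972491223818240000000) (148446842164433809622857778957016786334738302966005760000000) (by decide) (by unfold Matrix.BlockTriangular; decide) (by unfold Matrix.BlockTriangular; decide) (by decide) (by decide) (by decide) (by decide)

lemma evm5 : (H7.adjMatrix ℤ).charpoly.eval (-5) = 76695691 := by
  rw [eval_cp, show Matrix.diagonal (fun _ => (-5:ℤ)) - H7.adjMatrix ℤ = Mm5 from by decide]
  exact detEMU Mm5 Em5 Um5 (76695691) (228747420196013770008109548805501747200000000) (17543941456400631536287037449336181103211315200000000) (by decide) (by unfold Matrix.BlockTriangular; decide) (by unfold Matrix.BlockTriangular; decide) (by decide) (by decide) (by decide) (by decide)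

lemma evm4 : (H7.adjMatrix ℤ).charpoly.eval (-4) = 2211220 := by
  rw [eval_cp, show Matrix.diagonal (fun _ => (-4:ℤ)) - H7.adjMatrix ℤ = Mm4 from by decide]
  exact detEMU Mm4 Em4 Um4 (2211220) (5626720921221163212757567219512115200) (12441917835422660519313787787129579372544000) (by decide) (by unfold Matrix.BlockTriangular; decide) (by unfold Matrix.BlockTriangular; decide) (by decide) (by decide) (by decide) (by decide)

lemma evm3 : (H7.adjMatrix ℤ).charpoly.eval (-3) = 451 := by
  rw [eval_cp, show Matrix.diagonal (fun _ => (-3:ℤ)) - H7.adjMatrix ℤ = Mm3 from by decide]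
  exact detEMU Mm3 Em3 Um3 (451) (2074796802248141596262400) (935733357813911859914342400) (by decide) (by unfold Matrix.BlockTriangular; decide) (by unfold Matrix.BlockTriangular; decide) (by decide) (by decide) (by decide) (by decide)

lemma ev3 : (H7.adjMatrix ℤ).charpoly.eval (3) = -186245 := by
  rw [eval_cp, show Matrix.diagonal (fun _ => (3:ℤ)) - H7.adjMatrix ℤ = M3 from by decide]
  exact detEMU M3 E3 U3 (-186245) (205812292521416547159244800) (-38331510420651224825673547776000) (by decide) (by unfold Matrix.BlockTriangular; decide) (by unfold Matrix.BlockTriangular; decide) (by decide) (by decide) (by decide) (by decide)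

lemma ev4 : (H7.adjMatrix ℤ).charpoly.eval (4) = -3043436 := by
  rw [eval_cp, show Matrix.diagonal (fun _ => (4:ℤ)) - H7.adjMatrix ℤ = M4 from by decide]
  exact detEMU M4 E4 U4 (-3043436) (-79596114395938128399335178240000000) (242245680012716353743159057522032640000000) (by decide) (by unfold Matrix.BlockTriangular; decide) (by unfold Matrix.BlockTriangular; decide) (by decide) (by decide) (by decide) (by decide)

lemma ev5 : (H7.adjMatrix ℤ).charpoly.eval (5) = 25258771 := by
  rw [eval_cp, show Matrix.diagonal (fun _ => (5:ℤ)) - H7.adjMatrix ℤ = M5 from by decide]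
  exact detEMU M5 E5 U5 (25258771) (85337671374617111076687133531594752000000000) (2155524698924708821367603744520973105569792000000000) (by decide) (by unfold Matrix.BlockTriangular; decide) (by unfold Matrix.BlockTriangular; decide) (by decide) (by decide) (by decide) (by decide)

lemma ev6 : (H7.adjMatrix ℤ).charpoly.eval (6) = 705633220 := by
  rw [eval_cp, show Matrix.diagonal (fun _ => (6:ℤ)) - H7.adjMatrix ℤ = M6 from by decide]
  exact detEMU M6 E6 U6 (705633220) (94376619913034726149560218046005219710301483827200) (66595278201950813784732378243704771320987503203765059584000) (by decide) (by unfold Matrix.BlockTriangular; decide) (by unfold Matrix.BlockTriangular; decide) (by decide) (by decide) (by decide) (by decide)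

lemma ev7 : (H7.adjMatrix ℤ).charpoly.eval (7) = 6653729731 := by
  rw [eval_cp, show Matrix.diagonal (fun _ => (7:ℤ)) - H7.adjMatrix ℤ = M7 from by decide]
  exact detEMU M7 E7 U7 (6653729731) (6455768091675514654694692673216618336144026669311590400) (42954936088022505462668275367689280826481262147655434347374182400) (by decide) (by unfold Matrix.BlockTriangular; decide) (by unfold Matrix.BlockTriangular; decide) (by decide) (by decide) (by decide) (by decide)

lemma ev8 : (H7.adjMatrix ℤ).charpoly.eval (8) = 40663712980 := by
  rw [eval_cp, show Matrix.diagonal (fun _ => (8:ℤ)) - H7.adjMatrix ℤ = M8 from by decide]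
  exact detEMU M8 E8 U8 (40663712980) (76904369539003500832128603525752680064191940958923784192000) (3127217209841893273052868696219423020596069062782782730078949212160000) (by decide) (by unfold Matrix.BlockTriangular; decide) (by unfold Matrix.BlockTriangular; decide) (by decide) (by decide) (by decide) (by decide)

lemma ev9 : (H7.adjMatrix ℤ).charpoly.eval (9) = 189796974859 := by
  rw [eval_cp, show Matrix.diagonal (fun _ => (9:ℤ)) - H7.adjMatrix ℤ = M9 from by decide]
  exact detEMU M9 E9 U9 (189796974859) (265443621325229596387306854724319661890419354887715553280000000) (50380396323146517967924396332830064243695302712590747633827434987520000000) (by decide) (by unfold Matrix.BlockTriangular; decide) (by unfold Matrix.BlockTriangular; decide) (by decide) (by decide) (by decide) (by decide)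

lemma degSubLt {R : Type*} [CommRing R] (p q : R[X]) (c : WithBot ℕ)
    (h : max p.degree q.degree < c) : (p - q).degree < c :=
  lt_of_le_of_lt (Polynomial.degree_sub_le _ _) h

/-- The characteristic polynomial of the adjacency matrix of `H7`. -/
theorem charpoly_H7 :
    (H7.adjMatrix ℤ).charpoly =
      X ^ 12 - 27 * X ^ 10 - 20 * X ^ 9 + 201 * X ^ 8 + 192 * X ^ 7 - 532 * X ^ 6 - 552 * X ^ 5 + 492 * X ^ 4 + 560 * X ^ 3 - 84 * X ^ 2 - 192 * X - 44 := by
  have hs : ({-8, -7, -6, -5, -4, -3, 3, 4, 5, 6, 7, 8, 9} : Finset ℤ).card = 13 := by decide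
  apply Polynomial.eq_of_degree_sub_lt_of_eval_finset_eq ({-8, -7, -6, -5, -4, -3, 3, 4, 5, 6, 7, 8, 9} : Finset ℤ)
  · rw [hs]
    refine degSubLt _ _ _ ?_
    rw [Matrix.charpoly_degree_eq_dim]
    refine max_lt ?_ ?_
    · simp only [Fintype.card_fin]
      norm_num
    · refine lt_of_le_of_lt ?_ (by norm_num : ((12:ℕ):WithBot ℕ) < 13)
      compute_degree!
  · intro x hx
    simp only [Finset.mem_insert, Finset.mem_singleton] at hx
    rcases hx with rfl|rfl|rfl|rfl|rfl|rfl|rfl|rfl|rfl|rfl|rfl|rfl|rfl <;>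
      first
        | (rw [evm8]; norm_num)
        | (rw [evm7]; norm_num)
        | (rw [evm6]; norm_num)
        | (rw [evm5]; norm_num)
        | (rw [evm4]; norm_num)
        | (rw [evm3]; norm_num)
        | (rw [ev3]; norm_num)
        | (rw [ev4]; norm_num)
        | (rw [ev5]; norm_num)
        | (rw [ev6]; norm_num)
        | (rw [ev7]; norm_num)
        | (rw [ev8]; norm_num)
        | (rw [ev9]; norm_num)
end
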